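/- A set E ⊆ ℝ^d is weakly porous if and only if its closure is weakly porous. -/

import Mathlib

open MeasureTheory Metric

/-- A half-open axis-parallel cube in `ℝ^d`: `[a₁, a₁+l) × ⋯ × [a_d, a_d+l)`. -/
structure Cube (d : ℕ) where
  a : Fin d → ℝ
  l : ℝ
  l_pos : 0 < l

/-- The underlying point set of a cube. -/
def Cube.set {d : ℕ} (Q : Cube d) : Set (EuclideanSpace ℝ (Fin d)) :=
  {x | ∀ i, Q.a i ≤ x i ∧ x i < Q.a i + Q.l}

/-- `Q` is a dyadic subcube of `R`: a member of `𝒟_j(R)` for some `j ≥ 0`. -/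
def IsDyadicSubcube {d : ℕ} (R Q : Cube d) : Prop :=
  ∃ j : ℕ, ∃ k : Fin d → ℕ, (∀ i, k i < 2 ^ j) ∧ Q.l = R.l / 2 ^ j ∧
    ∀ i, Q.a i = R.a i + (k i : ℝ) * (R.l / 2 ^ j)

/-- `Q' ∈ ℱ(R,E)`: a maximal dyadic subcube of `R` avoiding `E`, i.e.
`Q' ∩ E = ∅` and its dyadic parent `πQ'` meets `E`. -/
def IsMaxEmpty {d : ℕ} (R : Cube d) (E : Set (EuclideanSpace ℝ (Fin d))) (Q' : Cube d) : Prop :=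
  IsDyadicSubcube R Q' ∧ Q'.set ∩ E = ∅ ∧
    ∃ P : Cube d, IsDyadicSubcube R P ∧ P.l = 2 * Q'.l ∧ Q'.set ⊆ P.set ∧ (P.set ∩ E).Nonempty

/-- `M = M(R)`: a largest dyadic subcube of `R` containing no point of `E`. -/
def IsLargestEmptyDyadic {d : ℕ} (R : Cube d) (E : Set (EuclideanSpace ℝ (Fin d)))
    (M : Cube d) : Prop :=
  IsDyadicSubcube R M ∧ M.set ∩ E = ∅ ∧
    ∀ Q : Cube d, IsDyadicSubcube R Q → Q.set ∩ E = ∅ → Q.l ≤ M.l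

/-- Weak porosity of `E ⊆ ℝ^d`. -/
def WeaklyPorous {d : ℕ} (E : Set (EuclideanSpace ℝ (Fin d))) : Prop :=
  ∃ c δ : ℝ, 0 < c ∧ c < 1 ∧ 0 < δ ∧ δ < 1 ∧
    ∀ R : Cube d, ∃ M : Cube d, IsLargestEmptyDyadic R E M ∧
      ∃ F : Finset (Cube d),
        (↑F : Set (Cube d)).Pairwise (fun Q Q' => Disjoint Q.set Q'.set) ∧
        (∀ Q ∈ F, IsDyadicSubcube R Q ∧ Q.set ∩ E = ∅ ∧
          ENNReal.ofReal δ * volume M.set ≤ volume Q.set) ∧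
        ENNReal.ofReal c * volume R.set ≤ ∑ Q ∈ F, volume Q.set

lemma Cube.volume_set {d : ℕ} (Q : Cube d) :
    volume Q.set = ENNReal.ofReal (Q.l ^ d) := by
  have h : Q.set = (MeasurableEquiv.toLp 2 (Fin d → ℝ)).symm ⁻¹'
      (Set.univ.pi fun i => Set.Ico (Q.a i) (Q.a i + Q.l)) := by
    ext x; simp [Cube.set, Set.mem_pi, MeasurableEquiv.coe_toLp_symm, Set.mem_Ico]
  rw [h, (EuclideanSpace.volume_preserving_symm_measurableEquiv_toLp (Fin d)).measure_preimage
    (MeasurableSet.univ_pi fun i => measurableSet_Ico).nullMeasurableSet]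
  rw [volume_pi_pi]
  simp [Real.volume_Ico, ← ENNReal.ofReal_pow Q.l_pos.le]

lemma IsDyadicSubcube.trans {d : ℕ} {R Q P : Cube d}
    (h1 : IsDyadicSubcube R Q) (h2 : IsDyadicSubcube Q P) : IsDyadicSubcube R P := by
  obtain ⟨j1, k1, hk1, hl1, ha1⟩ := h1
  obtain ⟨j2, k2, hk2, hl2, ha2⟩ := h2
  refine ⟨j1 + j2, fun i => k1 i * 2 ^ j2 + k2 i, fun i => ?_, ?_, fun i => ?_⟩
  · calc k1 i * 2 ^ j2 + k2 i < k1 i * 2 ^ j2 + 2 ^ j2 := Nat.add_lt_add_left (hk2 i) _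
    _ = (k1 i + 1) * 2 ^ j2 := by ring
    _ ≤ 2 ^ j1 * 2 ^ j2 := Nat.mul_le_mul_right _ (hk1 i)
    _ = 2 ^ (j1 + j2) := (pow_add 2 j1 j2).symm
  · rw [hl2, hl1]; rw [pow_add]; ring
  · rw [ha2 i, ha1 i, hl1]
    have h2j1 : (2:ℝ) ^ j1 ≠ 0 := by positivity
    have h2j2 : (2:ℝ) ^ j2 ≠ 0 := by positivity
    push_cast
    rw [pow_add]
    field_simp
    ring

noncomputable def Cube.inner {d : ℕ} (Q : Cube d) : Cube d :=
  ⟨fun i => Q.a i + Q.l / 4, Q.l / 4, by have := Q.l_pos; linarith⟩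

lemma inner_dyadic {d : ℕ} (Q : Cube d) : IsDyadicSubcube Q Q.inner := by
  refine ⟨2, fun _ => 1, fun i => by norm_num, by norm_num [Cube.inner], fun i => by
    norm_num [Cube.inner]⟩

lemma inner_subset {d : ℕ} (Q : Cube d) : Q.inner.set ⊆ Q.set := by
  intro x hx i
  obtain ⟨h1, h2⟩ := hx i
  have := Q.l_pos
  simp only [Cube.inner] at h1 h2
  constructor <;> nlinarith

lemma inner_injective {d : ℕ} : Function.Injective (Cube.inner (d := d)) := by
  rintro ⟨a, l, hl⟩ ⟨a', l', hl'⟩ h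
  simp only [Cube.inner, Cube.mk.injEq] at h ⊢
  obtain ⟨h1, h2⟩ := h
  have hll : l = l' := by linarith
  subst hll
  refine ⟨?_, rfl⟩
  funext i
  have := congrFun h1 i
  simpa using this

lemma coord_dist_le {d : ℕ} (x y : EuclideanSpace ℝ (Fin d)) (i : Fin d) :
    dist (x i) (y i) ≤ dist x y := by
  rw [EuclideanSpace.dist_eq]
  have h1 : dist (x i) (y i) ^ 2 ≤ ∑ j, dist (x j) (y j) ^ 2 :=
    Finset.single_le_sum (f := fun j => dist (x j) (y j) ^ 2)
      (fun j _ => sq_nonneg _) (Finset.mem_univ i)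
  calc dist (x i) (y i) = Real.sqrt (dist (x i) (y i) ^ 2) :=
        (Real.sqrt_sq dist_nonneg).symm
  _ ≤ _ := Real.sqrt_le_sqrt h1

lemma inner_closure_empty {d : ℕ} (Q : Cube d) (E : Set (EuclideanSpace ℝ (Fin d)))
    (hE : Q.set ∩ E = ∅) : Q.inner.set ∩ closure E = ∅ := by
  have hl := Q.l_pos
  rw [Set.eq_empty_iff_forall_notMem]
  rintro x ⟨hx, hxc⟩
  have hball : ball x (Q.l / 4) ⊆ Q.set := by
    intro y hy
    rw [mem_ball] at hy
    intro i
    obtain ⟨h1, h2⟩ := hx i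
    simp only [Cube.inner] at h1 h2
    have hd : dist (y i) (x i) ≤ dist y x := coord_dist_le y x i
    have : |y i - x i| < Q.l / 4 := by
      rw [← Real.dist_eq]; exact lt_of_le_of_lt hd hy
    rw [abs_lt] at this
    constructor <;> linarith [this.1, this.2]
  have := mem_closure_iff.mp hxc (ball x (Q.l / 4)) isOpen_ball
    (mem_ball_self (by linarith))
  obtain ⟨y, hy1, hy2⟩ := this
  have : y ∈ Q.set ∩ E := ⟨hball hy1, hy2⟩
  rw [hE] at this; exact this

lemma exists_largest {d : ℕ} (R : Cube d) (S : Set (EuclideanSpace ℝ (Fin d)))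
    (h : ∃ Q : Cube d, IsDyadicSubcube R Q ∧ Q.set ∩ S = ∅) :
    ∃ M : Cube d, IsLargestEmptyDyadic R S M := by
  have hlR := R.l_pos
  have hne : ∃ j : ℕ, ∃ Q : Cube d, (∃ k : Fin d → ℕ, (∀ i, k i < 2 ^ j) ∧
      Q.l = R.l / 2 ^ j ∧ ∀ i, Q.a i = R.a i + (k i : ℝ) * (R.l / 2 ^ j)) ∧
      Q.set ∩ S = ∅ := by
    obtain ⟨Q, ⟨j, hj⟩, hQS⟩ := h
    exact ⟨j, Q, hj, hQS⟩
  classical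
  obtain ⟨M, hM, hMS⟩ := Nat.find_spec hne
  refine ⟨M, ⟨Nat.find hne, hM⟩, hMS, ?_⟩
  intro Q hQ hQS
  obtain ⟨j, k, hk, hjl, hja⟩ := hQ
  have hj0 : Nat.find hne ≤ j := Nat.find_min' hne ⟨Q, ⟨k, hk, hjl, hja⟩, hQS⟩
  obtain ⟨k', hk', hMl, hMa⟩ := hM
  rw [hjl, hMl]
  have : (2:ℝ) ^ Nat.find hne ≤ 2 ^ j := by
    apply pow_le_pow_right₀ one_le_two hj0
  apply div_le_div_of_nonneg_left R.l_pos.le (by positivity) this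

lemma empty_of_subset {d : ℕ} {Q : Cube d} {S T : Set (EuclideanSpace ℝ (Fin d))}
    (hST : S ⊆ T) (h : Q.set ∩ T = ∅) : Q.set ∩ S = ∅ :=
  Set.eq_empty_of_subset_empty (h ▸ Set.inter_subset_inter_right _ hST)

/-- E is weakly porous iff its closure is weakly porous. -/
theorem stmt12 {d : ℕ} (E : Set (EuclideanSpace ℝ (Fin d))) :
    WeaklyPorous E ↔ WeaklyPorous (closure E) := by
  classical
  have h4 : (1:ℝ) ≤ 4 ^ d := one_le_pow₀ (by norm_num)
  constructor
  · rintro ⟨c, δ, hc, hc1, hδ, hδ1, hP⟩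
    refine ⟨c / 4 ^ d, δ / 4 ^ d, by positivity, ?_, by positivity, ?_, ?_⟩
    · rw [div_lt_one (by positivity)]; linarith
    · rw [div_lt_one (by positivity)]; linarith
    intro R
    obtain ⟨M, hM, F, hFdisj, hFmem, hFsum⟩ := hP R
    obtain ⟨M', hM'⟩ := exists_largest R (closure E)
      ⟨M.inner, hM.1.trans (inner_dyadic M), inner_closure_empty M E hM.2.1⟩
    have hM'l : M'.l ≤ M.l :=
      hM.2.2 M' hM'.1 (empty_of_subset subset_closure hM'.2.1)
    refine ⟨M', hM', F.image Cube.inner, ?_, ?_, ?_⟩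
    · intro x hx y hy hxy
      simp only [Finset.coe_image, Set.mem_image, Finset.mem_coe] at hx hy
      obtain ⟨Q, hQF, rfl⟩ := hx
      obtain ⟨Q', hQ'F, rfl⟩ := hy
      have hne : Q ≠ Q' := fun h => hxy (by rw [h])
      exact Set.disjoint_of_subset (inner_subset Q) (inner_subset Q')
        (hFdisj hQF hQ'F hne)
    · intro Q' hQ'
      simp only [Finset.mem_image] at hQ'
      obtain ⟨Q, hQF, rfl⟩ := hQ'
      obtain ⟨hQdy, hQE, hQvol⟩ := hFmem Q hQF
      refine ⟨hQdy.trans (inner_dyadic Q), inner_closure_empty Q E hQE, ?_⟩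
      have hreal : δ * M.l ^ d ≤ Q.l ^ d := by
        rw [Cube.volume_set, Cube.volume_set, ← ENNReal.ofReal_mul hδ.le] at hQvol
        exact (ENNReal.ofReal_le_ofReal_iff (pow_nonneg Q.l_pos.le d)).mp hQvol
      rw [Cube.volume_set, Cube.volume_set, ← ENNReal.ofReal_mul (by positivity)]
      apply ENNReal.ofReal_le_ofReal
      have hM'd : M'.l ^ d ≤ M.l ^ d := pow_le_pow_left₀ M'.l_pos.le hM'l d
      calc δ / 4 ^ d * M'.l ^ d ≤ δ / 4 ^ d * M.l ^ d := by
            apply mul_le_mul_of_nonneg_left hM'd (by positivity)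
      _ = (δ * M.l ^ d) / 4 ^ d := by ring
      _ ≤ Q.l ^ d / 4 ^ d := by
            apply div_le_div_of_nonneg_right hreal (by positivity)
      _ = (Cube.inner Q).l ^ d := by
            simp only [Cube.inner]; rw [div_pow]
    · rw [Finset.sum_image (fun x _ y _ h => inner_injective h)]
      have hsum : ∑ Q ∈ F, volume (Cube.inner Q).set
          = ENNReal.ofReal ((1:ℝ) / 4 ^ d) * ∑ Q ∈ F, volume Q.set := by
        rw [Finset.mul_sum]
        apply Finset.sum_congr rfl
        intro Q _
        rw [Cube.volume_set, Cube.volume_set, ← ENNReal.ofReal_mul (by positivity)]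
        congr 1
        simp only [Cube.inner]; rw [div_pow]; ring
      rw [hsum]
      have : ENNReal.ofReal (c / 4 ^ d) * volume R.set
          = ENNReal.ofReal ((1:ℝ) / 4 ^ d) * (ENNReal.ofReal c * volume R.set) := by
        rw [← mul_assoc, ← ENNReal.ofReal_mul (by positivity)]
        congr 2
        ring
      rw [this]
      exact mul_le_mul_right hFsum _
  · rintro ⟨c, δ, hc, hc1, hδ, hδ1, hP⟩
    refine ⟨c, δ / 4 ^ d, hc, hc1, by positivity, ?_, ?_⟩
    · rw [div_lt_one (by positivity)]; linarith
    intro R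
    obtain ⟨M', hM', F, hFdisj, hFmem, hFsum⟩ := hP R
    obtain ⟨M, hM⟩ := exists_largest R E
      ⟨M', hM'.1, empty_of_subset subset_closure hM'.2.1⟩
    have hMl : M.l ≤ 4 * M'.l := by
      have h1 : (Cube.inner M).l ≤ M'.l :=
        hM'.2.2 M.inner (hM.1.trans (inner_dyadic M)) (inner_closure_empty M E hM.2.1)
      simp only [Cube.inner] at h1
      linarith
    refine ⟨M, hM, F, hFdisj, ?_, hFsum⟩
    intro Q hQF
    obtain ⟨hQdy, hQE, hQvol⟩ := hFmem Q hQF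
    refine ⟨hQdy, empty_of_subset subset_closure hQE, ?_⟩
    have hreal : δ * M'.l ^ d ≤ Q.l ^ d := by
      rw [Cube.volume_set, Cube.volume_set, ← ENNReal.ofReal_mul hδ.le] at hQvol
      exact (ENNReal.ofReal_le_ofReal_iff (pow_nonneg Q.l_pos.le d)).mp hQvol
    rw [Cube.volume_set, Cube.volume_set, ← ENNReal.ofReal_mul (by positivity)]
    apply ENNReal.ofReal_le_ofReal
    have hMd : M.l ^ d ≤ (4 * M'.l) ^ d := pow_le_pow_left₀ M.l_pos.le hMl d
    calc δ / 4 ^ d * M.l ^ d ≤ δ / 4 ^ d * (4 * M'.l) ^ d := by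
          apply mul_le_mul_of_nonneg_left hMd (by positivity)
    _ = δ * M'.l ^ d := by rw [mul_pow]; field_simp
    _ ≤ Q.l ^ d := hreal
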